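/- Fix an integer $c \ge 4$ and set $\alpha = 2\pi/c$, $s$ the unique integer with $c/4 - 1 \le s < c/4$, and define $F(s) = 1 + 2\sum_{j=1}^{s}\cos^2(j\alpha)$, $G(s) = 1 + 2\sum_{j=1}^{s}\cos(j\alpha)$, $H(s) = 1 + 2\sum_{j=1}^{s} \sec(j\alpha)$, $M(s) = 1 + 2s$. Then for $c = 8$ (so $s = 1$, $\alpha = \pi/4$), the system $x^6 G + x^2 y^2 H + 2 x^4 y M + y^2 - x^4 = 0$, $2x^8 F + 3 x^6 y G - x^2 y^3 H - 2x^6 - 2y^3 = 0$ has a solution with $x > 0$, $y < 0$ and $-x^2 \cos(\pi/4) < y$. -/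

import Mathlib

open Real in
theorem eight_gon_system_has_solution :
    ∃ x y : ℝ, 0 < x ∧ y < 0 ∧ -x ^ 2 * Real.cos (π / 4) < y ∧
      x ^ 6 * (1 + 2 * Real.cos (π / 4)) + x ^ 2 * y ^ 2 * (1 + 2 / Real.cos (π / 4))
        + 2 * x ^ 4 * y * 3 + y ^ 2 - x ^ 4 = 0 ∧
      2 * x ^ 8 * (1 + 2 * Real.cos (π / 4) ^ 2) + 3 * x ^ 6 * y * (1 + 2 * Real.cos (π / 4))
        - x ^ 2 * y ^ 3 * (1 + 2 / Real.cos (π / 4)) - 2 * x ^ 6 - 2 * y ^ 3 = 0 := by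
  set s : ℝ := Real.sqrt 2 with hs_def
  have hs0 : 0 ≤ s := Real.sqrt_nonneg 2
  have hs2 : s ^ 2 = 2 := Real.sq_sqrt (by norm_num)
  have hsl : (1.414 : ℝ) < s := by nlinarith
  have hsu : s < 1.4143 := by nlinarith
  -- the quintic in t
  obtain ⟨t, htmem, hft⟩ :
      ∃ t ∈ Set.Icc (-0.55 : ℝ) (-0.53),
        (2 - 2*s) + (-9 + 3*s)*t + (-6 - 4*s)*t^2 + (-6 - 7*s)*t^3 - 12*t^4 + (-1 - 2*s)*t^5 = 0 := by
    have hcont : ContinuousOn (fun t : ℝ =>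
        (2 - 2*s) + (-9 + 3*s)*t + (-6 - 4*s)*t^2 + (-6 - 7*s)*t^3 - 12*t^4 + (-1 - 2*s)*t^5)
        (Set.Icc (-0.55 : ℝ) (-0.53)) := by fun_prop
    have hmem : (0 : ℝ) ∈ Set.Icc
        ((fun t : ℝ => (2 - 2*s) + (-9 + 3*s)*t + (-6 - 4*s)*t^2 + (-6 - 7*s)*t^3 - 12*t^4
          + (-1 - 2*s)*t^5) (-0.53))
        ((fun t : ℝ => (2 - 2*s) + (-9 + 3*s)*t + (-6 - 4*s)*t^2 + (-6 - 7*s)*t^3 - 12*t^4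
          + (-1 - 2*s)*t^5) (-0.55)) := by
      constructor
      · simp only
        nlinarith
      · simp only
        nlinarith
    obtain ⟨t, ht, hft⟩ := intermediate_value_Icc' (by norm_num : (-0.55 : ℝ) ≤ -0.53) hcont hmem
    exact ⟨t, ht, hft⟩
  obtain ⟨ht1, ht2⟩ := htmem
  have htneg : t < 0 := by linarith
  -- denominator
  have hD : (0 : ℝ) < 1 + s + 6*t + (1 + 2*s)*t^2 := by nlinarith
  have hnum : (0 : ℝ) < 1 - t^2 := by nlinarith
  have hXpos : (0 : ℝ) < (1 - t^2) / (1 + s + 6*t + (1 + 2*s)*t^2) := div_pos hnum hD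
  set x : ℝ := Real.sqrt ((1 - t^2) / (1 + s + 6*t + (1 + 2*s)*t^2)) with hx_def
  have hxpos : 0 < x := Real.sqrt_pos.mpr hXpos
  have hX : x ^ 2 = (1 - t^2) / (1 + s + 6*t + (1 + 2*s)*t^2) := Real.sq_sqrt hXpos.le
  have hx2pos : 0 < x ^ 2 := by positivity
  have hXD : x ^ 2 * (1 + s + 6*t + (1 + 2*s)*t^2) = 1 - t^2 := by
    rw [hX]; exact div_mul_cancel₀ _ (ne_of_gt hD)
  have hkey : x ^ 2 * (4 + 3*t*(1 + s) - t^3*(1 + 2*s)) = 2 + 2*t^3 := by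
    have h1 : x ^ 2 * (4 + 3*t*(1 + s) - t^3*(1 + 2*s)) * (1 + s + 6*t + (1 + 2*s)*t^2)
        = (2 + 2*t^3) * (1 + s + 6*t + (1 + 2*s)*t^2) := by
      have h2 : x ^ 2 * (4 + 3*t*(1 + s) - t^3*(1 + 2*s)) * (1 + s + 6*t + (1 + 2*s)*t^2)
          = (x ^ 2 * (1 + s + 6*t + (1 + 2*s)*t^2)) * (4 + 3*t*(1 + s) - t^3*(1 + 2*s)) := by
        ring
      rw [h2, hXD]
      linear_combination hft
    exact mul_right_cancel₀ (ne_of_gt hD) h1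
  have hcos : Real.cos (π / 4) = s / 2 := by
    rw [Real.cos_pi_div_four, hs_def]
  have hcosne : Real.cos (π / 4) ≠ 0 := by rw [hcos]; positivity
  have hdiv : (2 : ℝ) / (s / 2) = 2 * s := by
    rw [div_eq_iff (by positivity : (s : ℝ) / 2 ≠ 0)]
    nlinarith
  refine ⟨x, t * x ^ 2, hxpos, by nlinarith, ?_, ?_, ?_⟩
  · rw [hcos]
    nlinarith
  · rw [hcos, hdiv]
    linear_combination x ^ 4 * hXD
  · rw [hcos, hdiv]
    linear_combination x ^ 6 * hkey + x ^ 8 * hs2
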